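/- Fix h ∈ (0, 1/2) and α₁, α₂ > 0. For each α > 0 there exists R_α > ρ_h(α) such that H_α^h is strictly increasing on [R_α, +∞) and tends to +∞, so for every sufficiently large t there is a unique ρ_{α,t} ≥ R_α with H_α^h(ρ_{α,t}) = t. Then lim_{t→+∞} ( ρ_{α₁,t} − ρ_{α₂,t} ) = ( k_{α₂}^h − k_{α₁}^h )/c_h, where c_h = 2h/√(1 − 4h²) and k_α^h = lim_{ρ→+∞}( H_α^h(ρ) − c_h·ρ ). In particular the asymptotic horizontal distance d_∞(H_{α₁}^h, H_{α₂}^h) = lim_{t→+∞} | ρ_{α₁,t} − ρ_{α₂,t} | equals | k_{α₂}^h − k_{α₁}^h |/c_h. -/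

import Mathlib

open Real Set Filter MeasureTheory

/-- Inverse hyperbolic cosine. -/
noncomputable def arcosh (x : ℝ) : ℝ := Real.log (x + Real.sqrt (x ^ 2 - 1))

/-- The root `φ(h,α)` of the quadratic `(s² − 1) − (2hs − α)²`. -/
noncomputable def phi (h α : ℝ) : ℝ :=
  (-2 * α * h + Real.sqrt (1 - 4 * h ^ 2 + α ^ 2)) / (1 - 4 * h ^ 2)

/-- The negative root `b(h,α)` of the quadratic `(s² − 1) − (2hs − α)²`. -/
noncomputable def bb (h α : ℝ) : ℝ :=
  -(2 * h * α + Real.sqrt (1 - 4 * h ^ 2 + α ^ 2)) / (1 - 4 * h ^ 2)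

/-- The radius `ρ_h(α)` of the base circle of the rotational cmc `h` surface `H_α^h`. -/
noncomputable def rho (h α : ℝ) : ℝ := _root_.arcosh (phi h α)

/-- The derivative `u_α^h` of the profile function of `H_α^h`. -/
noncomputable def uu (h α ρ : ℝ) : ℝ :=
  (-α + 2 * h * Real.cosh ρ) /
    Real.sqrt (Real.sinh ρ ^ 2 - (-α + 2 * h * Real.cosh ρ) ^ 2)

/-- The profile function `H_α^h` of the rotational cmc `h` surfaces of Sa Earp–Toubiana. -/
noncomputable def HH (h α ρ : ℝ) : ℝ := ∫ w in rho h α..ρ, uu h α w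

section Aux
variable {h α : ℝ}

lemma q_pos (hh : h ∈ Set.Ioo (0:ℝ) (1/2)) : 0 < 1 - 4 * h ^ 2 := by
  obtain ⟨h1, h2⟩ := hh; nlinarith

lemma s_sq (hh : h ∈ Set.Ioo (0:ℝ) (1/2)) :
    Real.sqrt (1 - 4 * h ^ 2 + α ^ 2) ^ 2 = 1 - 4 * h ^ 2 + α ^ 2 :=
  Real.sq_sqrt (by nlinarith [q_pos hh, sq_nonneg α])

lemma s_pos (hh : h ∈ Set.Ioo (0:ℝ) (1/2)) :
    0 < Real.sqrt (1 - 4 * h ^ 2 + α ^ 2) :=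
  Real.sqrt_pos.2 (by nlinarith [q_pos hh, sq_nonneg α])

lemma D_factor (hh : h ∈ Set.Ioo (0:ℝ) (1/2)) (w : ℝ) :
    Real.sinh w ^ 2 - (-α + 2 * h * Real.cosh w) ^ 2
      = (1 - 4 * h ^ 2) * (Real.cosh w - phi h α) * (Real.cosh w - bb h α) := by
  have hq := q_pos hh
  have hs := s_sq (α := α) hh
  rw [Real.sinh_sq, phi, bb]
  have e : (1 - 4 * h ^ 2) * (1 - 4 * h ^ 2)⁻¹ = 1 := mul_inv_cancel₀ hq.ne'
  linear_combination (-4 * α * h * Real.cosh w + (1 + α ^ 2) * ((1 - 4 * h ^ 2) * (1 - 4 * h ^ 2)⁻¹ + 1)) * e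
    + (1 - 4 * h ^ 2) * ((1 - 4 * h ^ 2)⁻¹) ^ 2 * hs

lemma bb_neg (hh : h ∈ Set.Ioo (0:ℝ) (1/2)) (hα : 0 < α) : bb h α < 0 := by
  have hq := q_pos hh
  have hs := s_pos (α := α) hh
  have h1 : 0 < 2 * h * α + Real.sqrt (1 - 4 * h ^ 2 + α ^ 2) := by nlinarith [hh.1]
  rw [bb]
  exact div_neg_of_neg_of_pos (by linarith) hq

lemma one_le_phi (hh : h ∈ Set.Ioo (0:ℝ) (1/2)) (hα : 0 < α) : 1 ≤ phi h α := by
  have hq := q_pos hh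
  have hs := s_sq (α := α) hh
  have hsp := s_pos (α := α) hh
  rw [phi, le_div_iff₀ hq]
  nlinarith [sq_nonneg (2*h - α), sq_nonneg (Real.sqrt (1 - 4*h^2 + α^2) - (1 - 4*h^2) - 2*α*h)]

lemma cosh_arcosh {x : ℝ} (hx : 1 ≤ x) : Real.cosh (_root_.arcosh x) = x := by
  have h1 : 0 ≤ x ^ 2 - 1 := by nlinarith
  have hs : Real.sqrt (x ^ 2 - 1) ^ 2 = x ^ 2 - 1 := Real.sq_sqrt h1
  have hsn : 0 ≤ Real.sqrt (x ^ 2 - 1) := Real.sqrt_nonneg _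
  have hy : 0 < x + Real.sqrt (x ^ 2 - 1) := by nlinarith
  rw [_root_.arcosh, Real.cosh_log hy]
  have hinv : (x + Real.sqrt (x ^ 2 - 1))⁻¹ = x - Real.sqrt (x ^ 2 - 1) := by
    rw [inv_eq_iff_eq_inv, eq_comm, inv_eq_iff_eq_inv] at *
    · field_simp
      nlinarith
  rw [hinv]; ring

lemma arcosh_nonneg {x : ℝ} (hx : 1 ≤ x) : 0 ≤ _root_.arcosh x := by
  have h1 : 0 ≤ x ^ 2 - 1 := by nlinarith
  have hy : 1 ≤ x + Real.sqrt (x ^ 2 - 1) := by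
    nlinarith [Real.sqrt_nonneg (x ^ 2 - 1)]
  exact Real.log_nonneg hy

lemma arcosh_pos {x : ℝ} (hx : 1 < x) : 0 < _root_.arcosh x := by
  have hy : 1 < x + Real.sqrt (x ^ 2 - 1) := by
    nlinarith [Real.sqrt_nonneg (x ^ 2 - 1)]
  exact Real.log_pos hy

lemma cosh_rho (hh : h ∈ Set.Ioo (0:ℝ) (1/2)) (hα : 0 < α) :
    Real.cosh (rho h α) = phi h α := _root_.cosh_arcosh (one_le_phi hh hα)

lemma rho_nonneg (hh : h ∈ Set.Ioo (0:ℝ) (1/2)) (hα : 0 < α) : 0 ≤ rho h α :=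
  _root_.arcosh_nonneg (one_le_phi hh hα)

lemma cosh_sub_cosh_ge {x y : ℝ} (hy : 0 ≤ y) (hxy : y ≤ x) :
    Real.sinh y * (x - y) ≤ Real.cosh x - Real.cosh y := by
  have h1 := Real.cosh_add ((x+y)/2) ((x-y)/2)
  have h2 := Real.cosh_sub ((x+y)/2) ((x-y)/2)
  have e1 : (x+y)/2 + (x-y)/2 = x := by ring
  have e2 : (x+y)/2 - (x-y)/2 = y := by ring
  rw [e1] at h1; rw [e2] at h2
  have key : Real.cosh x - Real.cosh y
      = 2 * Real.sinh ((x+y)/2) * Real.sinh ((x-y)/2) := by linarith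
  rw [key]
  have h3 : Real.sinh y ≤ Real.sinh ((x+y)/2) := Real.sinh_le_sinh.2 (by linarith)
  have h4 : (x-y)/2 ≤ Real.sinh ((x-y)/2) := Real.self_le_sinh_iff.2 (by linarith)
  have h5 : 0 ≤ Real.sinh y := Real.sinh_nonneg_iff.2 hy
  nlinarith

lemma phi_lt_cosh (hh : h ∈ Set.Ioo (0:ℝ) (1/2)) (hα : 0 < α) {w : ℝ}
    (hw : rho h α < w) : phi h α < Real.cosh w := by
  have h0 := rho_nonneg hh hα
  rw [← cosh_rho hh hα]
  exact Real.cosh_lt_cosh.2 (by rw [abs_of_nonneg h0, abs_of_nonneg (by linarith)]; exact hw)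

lemma D_pos (hh : h ∈ Set.Ioo (0:ℝ) (1/2)) (hα : 0 < α) {w : ℝ} (hw : rho h α < w) :
    0 < Real.sinh w ^ 2 - (-α + 2 * h * Real.cosh w) ^ 2 := by
  rw [D_factor hh]
  have h1 := phi_lt_cosh hh hα hw
  have h2 := bb_neg hh hα
  have h3 := Real.one_le_cosh w
  have hq := q_pos hh
  have hφ := one_le_phi hh hα
  exact mul_pos (mul_pos hq (by linarith)) (by linarith)

lemma uu_continuousAt (hh : h ∈ Set.Ioo (0:ℝ) (1/2)) (hα : 0 < α) {w : ℝ}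
    (hw : rho h α < w) : ContinuousAt (uu h α) w := by
  have hD := D_pos hh hα hw
  have hc : Continuous fun ρ : ℝ =>
      Real.sqrt (Real.sinh ρ ^ 2 - (-α + 2 * h * Real.cosh ρ) ^ 2) := by
    fun_prop
  exact ContinuousAt.div (by fun_prop) hc.continuousAt
    (ne_of_gt (Real.sqrt_pos.2 hD))

lemma uu_measurable (h α : ℝ) : Measurable (uu h α) := by
  have h1 : Measurable fun ρ : ℝ => -α + 2 * h * Real.cosh ρ := by fun_prop
  have h2 : Measurable fun ρ : ℝ =>
      Real.sqrt (Real.sinh ρ ^ 2 - (-α + 2 * h * Real.cosh ρ) ^ 2) := by fun_prop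
  exact h1.div h2

lemma hphi_eq (hh : h ∈ Set.Ioo (0:ℝ) (1/2)) (hα : 0 < α) (h0 : Real.sinh (rho h α) = 0) :
    2 * h * phi h α - α = 0 := by
  have hD := D_factor (α := α) hh (rho h α)
  rw [cosh_rho hh hα, h0] at hD
  have h2 : (-α + 2 * h * phi h α) ^ 2 = 0 := by nlinarith [hD]
  have h3 : -α + 2 * h * phi h α = 0 := by
    have := sq_nonneg (-α + 2 * h * phi h α)
    nlinarith [abs_nonneg (-α + 2 * h * phi h α), sq_abs (-α + 2 * h * phi h α)]
  linarith

set_option maxHeartbeats 1000000 in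
lemma uu_intervalIntegrable (hh : h ∈ Set.Ioo (0:ℝ) (1/2)) (hα : 0 < α) {x : ℝ}
    (hx : rho h α ≤ x) : IntervalIntegrable (uu h α) MeasureTheory.volume (rho h α) x := by
  set ρ₀ := rho h α with hρ₀def
  set φ := phi h α with hφdef
  set b := bb h α with hbdef
  have hq := q_pos hh
  have hφ1 := one_le_phi hh hα
  have hb := bb_neg hh hα
  have hρ0 : 0 ≤ ρ₀ := rho_nonneg hh hα
  have hcr : Real.cosh ρ₀ = φ := cosh_rho hh hα
  have hφb : 0 < φ - b := by linarith
  set K := Real.sqrt ((1 - 4 * h ^ 2) * (φ - b)) with hKdef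
  have hK : 0 < K := Real.sqrt_pos.2 (by positivity)
  set A := 2 * h / K * Real.sqrt (Real.cosh x - φ) with hAdef
  set B := |2 * h * φ - α| / (K * Real.sqrt (Real.sinh ρ₀)) with hBdef
  have hA : 0 ≤ A := by
    exact mul_nonneg (div_nonneg (by linarith [hh.1]) hK.le) (Real.sqrt_nonneg _)
  have hB : 0 ≤ B := by positivity
  -- the dominating function
  have hg : IntervalIntegrable (fun w => A + B * (w - ρ₀) ^ (-(1/2) : ℝ))
      MeasureTheory.volume ρ₀ x := by
    apply IntervalIntegrable.add intervalIntegrable_const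
    apply IntervalIntegrable.const_mul
    have h1 : IntervalIntegrable (fun t : ℝ => t ^ (-(1/2) : ℝ)) MeasureTheory.volume 0 (x - ρ₀) :=
      intervalIntegral.intervalIntegrable_rpow' (by norm_num)
    simpa using h1.comp_sub_right ρ₀
  apply hg.mono_fun' ((uu_measurable h α).aestronglyMeasurable)
  -- a.e. bound on the interval
  rw [Set.uIoc_of_le hx]
  refine MeasureTheory.ae_restrict_of_forall_mem measurableSet_Ioc ?_
  intro w hw
  obtain ⟨hw1, hw2⟩ := hw
  show ‖uu h α w‖ ≤ A + B * (w - ρ₀) ^ (-(1/2) : ℝ)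
  have hw0 : 0 < w := lt_of_le_of_lt hρ0 hw1
  have hcφ : φ < Real.cosh w := phi_lt_cosh hh hα hw1
  have hD := D_factor (α := α) hh w
  have hDpos := D_pos hh hα hw1
  set N := -α + 2 * h * Real.cosh w with hNdef
  set D := Real.sinh w ^ 2 - N ^ 2 with hDdef
  have hsD : 0 < Real.sqrt D := Real.sqrt_pos.2 hDpos
  -- |uu w| = |N| / √D
  have huu : ‖uu h α w‖ = |N| / Real.sqrt D := by
    rw [uu, Real.norm_eq_abs, abs_div, abs_of_nonneg (Real.sqrt_nonneg _)]
  rw [huu]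
  -- |N| ≤ 2h(c - φ) + |2hφ - α|
  have hNb : |N| ≤ 2 * h * (Real.cosh w - φ) + |2 * h * φ - α| := by
    have : N = 2 * h * (Real.cosh w - φ) + (2 * h * φ - α) := by rw [hNdef]; ring
    rw [this]
    calc |2 * h * (Real.cosh w - φ) + (2 * h * φ - α)|
        ≤ |2 * h * (Real.cosh w - φ)| + |2 * h * φ - α| := abs_add_le _ _
      _ = 2 * h * (Real.cosh w - φ) + |2 * h * φ - α| := by
          rw [abs_of_nonneg (by nlinarith [hh.1])]
  have step1 : |N| / Real.sqrt D
      ≤ 2 * h * (Real.cosh w - φ) / Real.sqrt D + |2 * h * φ - α| / Real.sqrt D := by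
    rw [← add_div]
    exact div_le_div_of_nonneg_right hNb hsD.le |>.trans_eq rfl
  -- lower bounds for √D
  have hDge1 : (1 - 4 * h ^ 2) * (φ - b) * (Real.cosh w - φ) ≤ D := by
    rw [hD]
    have h3 := Real.one_le_cosh w
    nlinarith [sq_nonneg (Real.cosh w - φ)]
  have hsD1 : K * Real.sqrt (Real.cosh w - φ) ≤ Real.sqrt D := by
    rw [hKdef, ← Real.sqrt_mul (by positivity)]
    exact Real.sqrt_le_sqrt hDge1
  -- term 1
  have hT1 : 2 * h * (Real.cosh w - φ) / Real.sqrt D ≤ A := by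
    have hKs : 0 < K * Real.sqrt (Real.cosh w - φ) := by
      apply mul_pos hK (Real.sqrt_pos.2 (by linarith))
    calc 2 * h * (Real.cosh w - φ) / Real.sqrt D
        ≤ 2 * h * (Real.cosh w - φ) / (K * Real.sqrt (Real.cosh w - φ)) := by
          apply div_le_div_of_nonneg_left (by nlinarith [hh.1]) hKs hsD1
      _ = 2 * h / K * ((Real.cosh w - φ) / Real.sqrt (Real.cosh w - φ)) := by ring
      _ = 2 * h / K * Real.sqrt (Real.cosh w - φ) := by rw [Real.div_sqrt]
      _ ≤ A := by
          rw [hAdef]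
          apply mul_le_mul_of_nonneg_left _ (div_nonneg (by linarith [hh.1]) hK.le)
          apply Real.sqrt_le_sqrt
          have : Real.cosh w ≤ Real.cosh x := by
            rw [Real.cosh_le_cosh, abs_of_nonneg (le_of_lt hw0),
              abs_of_nonneg (by linarith : (0:ℝ) ≤ x)]
            exact hw2
          linarith
  -- term 2
  have hrw : 0 < w - ρ₀ := by linarith
  have hrpow : (w - ρ₀) ^ (-(1/2) : ℝ) = (Real.sqrt (w - ρ₀))⁻¹ := by
    rw [Real.rpow_neg (le_of_lt hrw), ← Real.sqrt_eq_rpow]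
  have hT2 : |2 * h * φ - α| / Real.sqrt D ≤ B * (w - ρ₀) ^ (-(1/2) : ℝ) := by
    rcases eq_or_lt_of_le (Real.sinh_nonneg_iff.2 hρ0) with h0 | h0
    · -- sinh ρ₀ = 0, numerator vanishes
      have h1 := hphi_eq hh hα h0.symm
      rw [← hφdef] at h1
      rw [h1, abs_zero, zero_div]
      exact mul_nonneg hB (Real.rpow_nonneg hrw.le _)
    · -- sinh ρ₀ > 0
      have hcc : Real.sinh ρ₀ * (w - ρ₀) ≤ Real.cosh w - φ := by
        have := cosh_sub_cosh_ge hρ0 (le_of_lt hw1)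
        rwa [hcr] at this
      have hDge2 : (1 - 4 * h ^ 2) * (φ - b) * (Real.sinh ρ₀ * (w - ρ₀)) ≤ D := by
        have : (1 - 4 * h ^ 2) * (φ - b) * (Real.sinh ρ₀ * (w - ρ₀))
            ≤ (1 - 4 * h ^ 2) * (φ - b) * (Real.cosh w - φ) := by
          apply mul_le_mul_of_nonneg_left hcc (by positivity)
        linarith [hDge1]
      have hsD2 : K * (Real.sqrt (Real.sinh ρ₀) * Real.sqrt (w - ρ₀)) ≤ Real.sqrt D := by
        rw [hKdef, ← Real.sqrt_mul (Real.sinh_nonneg_iff.2 hρ0), ← Real.sqrt_mul (by positivity)]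
        exact Real.sqrt_le_sqrt hDge2
      have hpos2 : 0 < K * (Real.sqrt (Real.sinh ρ₀) * Real.sqrt (w - ρ₀)) := by
        apply mul_pos hK (mul_pos (Real.sqrt_pos.2 h0) (Real.sqrt_pos.2 hrw))
      calc |2 * h * φ - α| / Real.sqrt D
          ≤ |2 * h * φ - α| / (K * (Real.sqrt (Real.sinh ρ₀) * Real.sqrt (w - ρ₀))) :=
            div_le_div_of_nonneg_left (abs_nonneg _) hpos2 hsD2
        _ = B * (Real.sqrt (w - ρ₀))⁻¹ := by
            rw [hBdef]; ring
        _ = B * (w - ρ₀) ^ (-(1/2) : ℝ) := by rw [hrpow]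
  calc |N| / Real.sqrt D ≤ _ := step1
    _ ≤ A + B * (w - ρ₀) ^ (-(1/2) : ℝ) := add_le_add hT1 hT2

lemma cosh_ge_linear (w : ℝ) : (1 + w) / 2 ≤ Real.cosh w := by
  rw [Real.cosh_eq]
  have h1 := Real.add_one_le_exp w
  have h2 := Real.exp_pos (-w)
  linarith

lemma uu_lower (hh : h ∈ Set.Ioo (0:ℝ) (1/2)) (hα : 0 < α) {w : ℝ}
    (hw : rho h α < w) (hM : α / h ≤ Real.cosh w) : h ≤ uu h α w := by
  have hh1 := hh.1
  have hc1 : (1:ℝ) ≤ Real.cosh w := Real.one_le_cosh w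
  have hc0 : (0:ℝ) < Real.cosh w := by linarith
  have hαc : α ≤ h * Real.cosh w := by
    rw [div_le_iff₀ hh1] at hM; linarith [hM]
  have hN : h * Real.cosh w ≤ -α + 2 * h * Real.cosh w := by nlinarith
  have hDpos := D_pos hh hα hw
  have hDle : Real.sinh w ^ 2 - (-α + 2 * h * Real.cosh w) ^ 2 ≤ Real.cosh w ^ 2 := by
    nlinarith [Real.sinh_sq w, sq_nonneg (-α + 2 * h * Real.cosh w)]
  have hsD : Real.sqrt (Real.sinh w ^ 2 - (-α + 2 * h * Real.cosh w) ^ 2) ≤ Real.cosh w := by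
    calc Real.sqrt (Real.sinh w ^ 2 - (-α + 2 * h * Real.cosh w) ^ 2)
        ≤ Real.sqrt (Real.cosh w ^ 2) := Real.sqrt_le_sqrt hDle
      _ = Real.cosh w := by rw [Real.sqrt_sq hc0.le]
  have hsDpos : 0 < Real.sqrt (Real.sinh w ^ 2 - (-α + 2 * h * Real.cosh w) ^ 2) :=
    Real.sqrt_pos.2 hDpos
  rw [uu, le_div_iff₀ hsDpos]
  calc h * Real.sqrt (Real.sinh w ^ 2 - (-α + 2 * h * Real.cosh w) ^ 2)
      ≤ h * Real.cosh w := by nlinarith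
    _ ≤ -α + 2 * h * Real.cosh w := hN

lemma HH_add (hh : h ∈ Set.Ioo (0:ℝ) (1/2)) (hα : 0 < α) {R x y : ℝ}
    (hR : rho h α < R) (hcont : ContinuousOn (uu h α) (Set.Ici R))
    (hx : R ≤ x) (hxy : x ≤ y) :
    HH h α y = HH h α x + ∫ w in x..y, uu h α w := by
  have h1 : IntervalIntegrable (uu h α) MeasureTheory.volume (rho h α) x :=
    uu_intervalIntegrable hh hα (by linarith)
  have h2 : IntervalIntegrable (uu h α) MeasureTheory.volume x y := by
    apply (hcont.mono _).intervalIntegrable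
    rw [Set.uIcc_of_le hxy]
    exact fun z hz => le_trans hx hz.1
  rw [HH, HH, intervalIntegral.integral_add_adjacent_intervals h1 h2]

lemma HH_grow (hh : h ∈ Set.Ioo (0:ℝ) (1/2)) (hα : 0 < α) {R x y : ℝ}
    (hR : rho h α < R) (hcont : ContinuousOn (uu h α) (Set.Ici R))
    (hlow : ∀ w, R ≤ w → h ≤ uu h α w)
    (hx : R ≤ x) (hxy : x ≤ y) :
    HH h α x + h * (y - x) ≤ HH h α y := by
  rw [HH_add hh hα hR hcont hx hxy]
  have h2 : IntervalIntegrable (uu h α) MeasureTheory.volume x y := by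
    apply (hcont.mono _).intervalIntegrable
    rw [Set.uIcc_of_le hxy]
    exact fun z hz => le_trans hx hz.1
  have h3 : (∫ w in x..y, (h:ℝ)) ≤ ∫ w in x..y, uu h α w := by
    apply intervalIntegral.integral_mono_on hxy intervalIntegrable_const h2
    exact fun z hz => hlow z (le_trans hx hz.1)
  rw [intervalIntegral.integral_const, smul_eq_mul] at h3
  linarith [h3]

lemma part1 (hh : h ∈ Set.Ioo (0:ℝ) (1/2)) (hα : 0 < α) :
    ∃ R : ℝ, rho h α < R ∧ StrictMonoOn (HH h α) (Set.Ici R) ∧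
      Filter.Tendsto (HH h α) Filter.atTop Filter.atTop ∧
      ∃ T : ℝ, ∀ t : ℝ, T ≤ t → ∃! ρ : ℝ, R ≤ ρ ∧ HH h α ρ = t := by
  have hh1 := hh.1
  set R := max (rho h α + 1) (2 * α / h + 1) with hRdef
  have hR : rho h α < R := lt_of_lt_of_le (by linarith) (le_max_left _ _)
  have hRw : ∀ w, R ≤ w → rho h α < w ∧ α / h ≤ Real.cosh w := by
    intro w hw
    constructor
    · exact lt_of_lt_of_le hR hw
    · have h1 : 2 * α / h + 1 ≤ w := le_trans (le_max_right _ _) hw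
      have h2 := cosh_ge_linear w
      have h3 : 0 < α / h := div_pos hα hh1
      have h4 : 2 * α ≤ (w - 1) * h := (div_le_iff₀ hh1).1 (by linarith : 2 * α / h ≤ w - 1)
      have : α / h ≤ (1 + w) / 2 := by
        rw [div_le_div_iff₀ hh1 two_pos]
        nlinarith
      linarith
  have hcont : ContinuousOn (uu h α) (Set.Ici R) := fun w hw =>
    (uu_continuousAt hh hα (hRw w hw).1).continuousWithinAt
  have hlow : ∀ w, R ≤ w → h ≤ uu h α w := fun w hw =>
    uu_lower hh hα (hRw w hw).1 (hRw w hw).2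
  have hmono : StrictMonoOn (HH h α) (Set.Ici R) := by
    intro x hx y hy hxy
    have := HH_grow hh hα hR hcont hlow hx (le_of_lt hxy)
    nlinarith [this]
  have htop : Filter.Tendsto (HH h α) Filter.atTop Filter.atTop := by
    have hbase : Filter.Tendsto (fun w : ℝ => (HH h α R - h * R) + h * w)
        Filter.atTop Filter.atTop :=
      Filter.tendsto_atTop_add_const_left _ _
        (Filter.Tendsto.const_mul_atTop hh1 Filter.tendsto_id)
    apply Filter.tendsto_atTop_mono' _ _ hbase
    filter_upwards [Filter.eventually_ge_atTop R] with w hw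
    have := HH_grow hh hα hR hcont hlow (le_refl R) hw
    linarith [this]
  refine ⟨R, hR, hmono, htop, HH h α R, fun t ht => ?_⟩
  -- existence via IVT
  obtain ⟨b₀, hb₀⟩ := Filter.eventually_atTop.1 (Filter.tendsto_atTop.1 htop t)
  set b := max b₀ R with hbdef
  have hbR : R ≤ b := le_max_right _ _
  have hbt : t ≤ HH h α b := hb₀ b (le_max_left _ _)
  have hHHcont : ContinuousOn (HH h α) (Set.Icc R b) := by
    have h1 : ContinuousOn (HH h α) (Set.uIcc (rho h α) b) := by
      apply intervalIntegral.continuousOn_primitive_interval'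
        (uu_intervalIntegrable hh hα (by linarith)) Set.left_mem_uIcc
    apply h1.mono
    rw [Set.uIcc_of_le (by linarith : rho h α ≤ b)]
    exact fun z hz => ⟨by linarith [hz.1], hz.2⟩
  have hivt := intermediate_value_Icc hbR hHHcont
  have hmem : t ∈ Set.Icc (HH h α R) (HH h α b) := ⟨ht, hbt⟩
  obtain ⟨ρ, hρmem, hρeq⟩ := hivt hmem
  refine ⟨ρ, ⟨hρmem.1, hρeq⟩, ?_⟩
  intro ρ' ⟨hρ'1, hρ'2⟩
  exact hmono.injOn hρ'1 hρmem.1 (by rw [hρ'2, hρeq])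

lemma HH_bounded (hh : h ∈ Set.Ioo (0:ℝ) (1/2)) (hα : 0 < α) {B : ℝ}
    (hB : rho h α ≤ B) : ∃ K : ℝ, ∀ ρ ∈ Set.Icc (rho h α) B, HH h α ρ ≤ K := by
  have hcont : ContinuousOn (HH h α) (Set.Icc (rho h α) B) := by
    have h1 : ContinuousOn (HH h α) (Set.uIcc (rho h α) B) :=
      intervalIntegral.continuousOn_primitive_interval'
        (uu_intervalIntegrable hh hα hB) Set.left_mem_uIcc
    rwa [Set.uIcc_of_le hB] at h1
  obtain ⟨K, hK⟩ := (isCompact_Icc.image_of_continuousOn hcont).bddAbove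
  exact ⟨K, fun ρ hρ => hK (Set.mem_image_of_mem _ hρ)⟩

lemma r_tendsto (hh : h ∈ Set.Ioo (0:ℝ) (1/2)) (hα : 0 < α) {r : ℝ → ℝ} {T : ℝ}
    (hr : ∀ t : ℝ, T ≤ t → rho h α < r t ∧ HH h α (r t) = t) :
    Filter.Tendsto r Filter.atTop Filter.atTop := by
  rw [Filter.tendsto_atTop]
  intro b
  obtain ⟨K, hK⟩ := HH_bounded hh hα (le_max_right b (rho h α))
  filter_upwards [Filter.eventually_ge_atTop (max T (K + 1))] with t ht
  have ht1 : T ≤ t := le_trans (le_max_left _ _) ht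
  have ht2 : K + 1 ≤ t := le_trans (le_max_right _ _) ht
  obtain ⟨h1, h2⟩ := hr t ht1
  by_contra hcon
  push_neg at hcon
  have hmem : r t ∈ Set.Icc (rho h α) (max b (rho h α)) :=
    ⟨h1.le, le_trans hcon.le (le_max_left _ _)⟩
  have := hK _ hmem
  rw [h2] at this
  linarith


/-- each H_α^h is eventually strictly increasing to +∞, so for large t
the equation H_α^h(ρ) = t has a unique large solution ρ_{α,t}; moreover for any
inverse branches r₁, r₂ of H_{α₁}^h, H_{α₂}^h one has
ρ_{α₁,t} − ρ_{α₂,t} → (k_{α₂}^h − k_{α₁}^h)/c_h, and the asymptotic horizontal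
distance is |k_{α₂}^h − k_{α₁}^h|/c_h. -/
theorem stmt_18 (h α₁ α₂ : ℝ) (hh : h ∈ Set.Ioo (0 : ℝ) (1 / 2))
    (hα₁ : 0 < α₁) (hα₂ : 0 < α₂) :
    (∀ α : ℝ, 0 < α → ∃ R : ℝ, rho h α < R ∧
      StrictMonoOn (HH h α) (Set.Ici R) ∧
      Filter.Tendsto (HH h α) Filter.atTop Filter.atTop ∧
      ∃ T : ℝ, ∀ t : ℝ, T ≤ t → ∃! ρ : ℝ, R ≤ ρ ∧ HH h α ρ = t) ∧
    (∀ k₁ k₂ : ℝ,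
      Filter.Tendsto (fun ρ => HH h α₁ ρ - 2 * h / Real.sqrt (1 - 4 * h ^ 2) * ρ)
        Filter.atTop (nhds k₁) →
      Filter.Tendsto (fun ρ => HH h α₂ ρ - 2 * h / Real.sqrt (1 - 4 * h ^ 2) * ρ)
        Filter.atTop (nhds k₂) →
      ∀ r₁ r₂ : ℝ → ℝ, ∀ T : ℝ,
        (∀ t : ℝ, T ≤ t → rho h α₁ < r₁ t ∧ HH h α₁ (r₁ t) = t) →
        (∀ t : ℝ, T ≤ t → rho h α₂ < r₂ t ∧ HH h α₂ (r₂ t) = t) →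
        Filter.Tendsto (fun t => r₁ t - r₂ t) Filter.atTop
          (nhds ((k₂ - k₁) / (2 * h / Real.sqrt (1 - 4 * h ^ 2)))) ∧
        Filter.Tendsto (fun t => |r₁ t - r₂ t|) Filter.atTop
          (nhds (|k₂ - k₁| / (2 * h / Real.sqrt (1 - 4 * h ^ 2))))) := by
  constructor
  · exact fun α hα => part1 hh hα
  · intro k₁ k₂ hk₁ hk₂ r₁ r₂ T hr₁ hr₂
    set c := 2 * h / Real.sqrt (1 - 4 * h ^ 2) with hcdef
    have hc : 0 < c :=
      div_pos (by linarith [hh.1]) (Real.sqrt_pos.2 (q_pos hh))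
    have hrt₁ := r_tendsto hh hα₁ hr₁
    have hrt₂ := r_tendsto hh hα₂ hr₂
    have h1 : Filter.Tendsto (fun t => t - c * r₁ t) Filter.atTop (nhds k₁) := by
      apply Filter.Tendsto.congr' _ (hk₁.comp hrt₁)
      filter_upwards [Filter.eventually_ge_atTop T] with t ht
      simp only [Function.comp]
      rw [(hr₁ t ht).2]
    have h2 : Filter.Tendsto (fun t => t - c * r₂ t) Filter.atTop (nhds k₂) := by
      apply Filter.Tendsto.congr' _ (hk₂.comp hrt₂)
      filter_upwards [Filter.eventually_ge_atTop T] with t ht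
      simp only [Function.comp]
      rw [(hr₂ t ht).2]
    have h3 : Filter.Tendsto (fun t => c * (r₁ t - r₂ t)) Filter.atTop (nhds (k₂ - k₁)) := by
      have := h2.sub h1
      apply Filter.Tendsto.congr _ this
      intro t; ring
    have h4 : Filter.Tendsto (fun t => r₁ t - r₂ t) Filter.atTop (nhds ((k₂ - k₁) / c)) := by
      have := h3.div_const c
      apply Filter.Tendsto.congr _ this
      intro t
      field_simp
    refine ⟨h4, ?_⟩
    have h5 := (continuous_abs.tendsto _).comp h4
    have : |(k₂ - k₁) / c| = |k₂ - k₁| / c := by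
      rw [abs_div, abs_of_pos hc]
    rwa [this] at h5
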